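/- Let λ_1 ≥ ⋯ ≥ λ_d > 0 with λ_p > λ_{p+1}, and 0 < β with β(λ_1 − λ_d) < 1. Define the linear operator ℒ on ℝ^{(d−p)×p} by ℒT = T + β ul(Λ) T − β T ol(Λ), where ol(Λ) = diag(λ_1,…,λ_p) and ul(Λ) = diag(λ_{p+1},…,λ_d). Then ℒT = L ∘ T (Hadamard product) where L_{ij} = 1 + β λ_{p+i} − β λ_j, and the operator norm of ℒ induced by the spectral norm (and also by the Frobenius norm) equals its spectral radius 1 − β(λ_p − λ_{p+1}). -/

import Mathlib

open scoped Matrix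

/-- Singular values of a real matrix, given as the square roots of the eigenvalues of `Aᴴ * A`. -/
noncomputable def sVals {m n : Type*} [Fintype m] [Fintype n] [DecidableEq n]
    (A : Matrix m n ℝ) : n → ℝ :=
  fun j => Real.sqrt ((Matrix.posSemidef_conjTranspose_mul_self A).isHermitian.eigenvalues j)

/-- Spectral norm of a real matrix: the largest singular value. -/
noncomputable def spec {m n : Type*} [Fintype m] [Fintype n] [DecidableEq n]
    (A : Matrix m n ℝ) : ℝ := ⨆ j, sVals A j

/-- Frobenius norm of a real matrix. -/
noncomputable def frob {m n : Type*} [Fintype m] [Fintype n] (A : Matrix m n ℝ) : ℝ :=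
  Real.sqrt (∑ i, ∑ j, (A i j) ^ 2)

open scoped Matrix.Norms.L2Operator

section helpers

variable {m n : Type*} [Fintype m] [Fintype n]

private lemma euclid_norm (x : EuclideanSpace ℝ n) : ‖x‖ = Real.sqrt (∑ i, (x i)^2) := by
  rw [EuclideanSpace.norm_eq]
  congr 1
  exact Finset.sum_congr rfl fun i _ => by rw [Real.norm_eq_abs, sq_abs]

lemma diag_norm_le [DecidableEq n] (d : n → ℝ) {M : ℝ} (hM : 0 ≤ M)
    (h : ∀ i, |d i| ≤ M) : ‖Matrix.diagonal d‖ ≤ M := by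
  rw [Matrix.l2_opNorm_def]
  refine ContinuousLinearMap.opNorm_le_bound _ hM fun x => ?_
  have key : ((Matrix.toEuclideanLin.trans LinearMap.toContinuousLinearMap)
      (Matrix.diagonal d)) x
      = (WithLp.equiv 2 (n → ℝ)).symm (Matrix.diagonal d *ᵥ (WithLp.equiv 2 (n → ℝ)) x) := rfl
  rw [key, euclid_norm, euclid_norm]
  have h1 : ∀ i, ((WithLp.equiv 2 (n → ℝ)).symm
      (Matrix.diagonal d *ᵥ (WithLp.equiv 2 (n → ℝ)) x) i) = d i * x i := by
    intro i
    simp [Matrix.mulVec_diagonal]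
  calc Real.sqrt (∑ i, ((WithLp.equiv 2 (n → ℝ)).symm
        (Matrix.diagonal d *ᵥ (WithLp.equiv 2 (n → ℝ)) x) i)^2)
      = Real.sqrt (∑ i, (d i * x i)^2) := by
        congr 1; exact Finset.sum_congr rfl fun i _ => by rw [h1]
    _ ≤ Real.sqrt (∑ i, M^2 * (x i)^2) := by
        apply Real.sqrt_le_sqrt
        apply Finset.sum_le_sum
        intro i _
        have : (d i)^2 ≤ M^2 := by
          have := h i
          nlinarith [abs_nonneg (d i), sq_abs (d i), neg_abs_le (d i), le_abs_self (d i)]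
        nlinarith [sq_nonneg (x i)]
    _ = M * Real.sqrt (∑ i, (x i)^2) := by
        rw [← Finset.mul_sum, Real.sqrt_mul (sq_nonneg M), Real.sqrt_sq hM]

lemma le_diag_norm [DecidableEq n] (d : n → ℝ) (j : n) : |d j| ≤ ‖Matrix.diagonal d‖ := by
  have h := Matrix.l2_opNorm_mulVec (Matrix.diagonal d) (EuclideanSpace.single j (1:ℝ))
  rw [EuclideanSpace.norm_single] at h
  have key : (EuclideanSpace.equiv n ℝ).symm
      (Matrix.diagonal d *ᵥ (EuclideanSpace.single j (1:ℝ)))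
      = EuclideanSpace.single j (d j) := by
    apply PiLp.ext
    intro i
    simp [Matrix.mulVec_diagonal, EuclideanSpace.single_apply]
  rw [key, EuclideanSpace.norm_single] at h
  simpa [Real.norm_eq_abs] using h

lemma psd_norm_eq [DecidableEq n] [Nonempty n] {H : Matrix n n ℝ} (hH : H.PosSemidef) :
    ‖H‖ = ⨆ i, hH.isHermitian.eigenvalues i := by
  have hbdd : BddAbove (Set.range hH.isHermitian.eigenvalues) :=
    Set.Finite.bddAbove (Set.finite_range _)
  have hM0 : 0 ≤ ⨆ i, hH.isHermitian.eigenvalues i :=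
    le_trans (hH.eigenvalues_nonneg (Classical.arbitrary n)) (le_ciSup hbdd _)
  have hder : H = (hH.isHermitian.eigenvectorUnitary : Matrix n n ℝ)
      * Matrix.diagonal hH.isHermitian.eigenvalues
      * (star (hH.isHermitian.eigenvectorUnitary : Matrix n n ℝ)) := by
    conv_lhs => rw [Matrix.IsHermitian.spectral_theorem hH.isHermitian]
    congr
  have hnd : ‖H‖ = ‖Matrix.diagonal hH.isHermitian.eigenvalues‖ := by
    conv_lhs => rw [hder]
    rw [mul_assoc]
    rw [CStarRing.norm_mem_unitary_mul _ (hH.isHermitian.eigenvectorUnitary).2]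
    rw [CStarRing.norm_mul_mem_unitary _ (Unitary.star_mem (hH.isHermitian.eigenvectorUnitary).2)]
  rw [hnd]
  refine le_antisymm (diag_norm_le _ hM0 fun i => ?_) (ciSup_le fun i => ?_)
  · rw [abs_of_nonneg (hH.eigenvalues_nonneg i)]
    exact le_ciSup hbdd i
  · exact (le_abs_self _).trans (le_diag_norm _ i)

lemma spec_eq_norm [DecidableEq n] [Nonempty n] (A : Matrix m n ℝ) : spec A = ‖A‖ := by
  have hpsd := Matrix.posSemidef_conjTranspose_mul_self A
  have h2 : ‖Aᴴ * A‖ = ⨆ j, hpsd.isHermitian.eigenvalues j := psd_norm_eq hpsd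
  have h1 : spec A = ⨆ j, Real.sqrt (hpsd.isHermitian.eigenvalues j) := rfl
  rw [h1, ← Monotone.map_ciSup_of_continuousAt (Real.continuous_sqrt.continuousAt)
    (fun a b hab => Real.sqrt_le_sqrt hab) (Set.Finite.bddAbove (Set.finite_range _)),
    ← h2, Matrix.l2_opNorm_conjTranspose_mul_self, Real.sqrt_mul_self (norm_nonneg A)]

lemma ciSup_eq_of {ι : Sort*} (f : ι → ℝ) {c : ℝ} (hub : ∀ x, f x ≤ c) (hx : ∃ x, f x = c) :
    (⨆ x, f x) = c := by
  obtain ⟨x0, hx0⟩ := hx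
  have : Nonempty ι := ⟨x0⟩
  have hb : BddAbove (Set.range f) := ⟨c, by rintro y ⟨i, rfl⟩; exact hub i⟩
  exact le_antisymm (ciSup_le hub) (hx0 ▸ le_ciSup hb x0)

end helpers

set_option maxHeartbeats 1000000 in
/-- The operator `ℒT = T + β ulΛ T - β T olΛ` is Hadamard multiplication by the matrix
`L_{ij} = 1 + β λ_{p+i} - β λ_j`, and its induced operator norm, both for the spectral
and for the Frobenius norm, equals its spectral radius `1 - β(λ_p - λ_{p+1})`
(0-based indexing: `lam 0, …, lam (p+m-1)`). -/
theorem stmt7 {p m : ℕ} (hp : 0 < p) (hm : 0 < m) (lam : ℕ → ℝ) (β : ℝ) (hβ : 0 < β)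
    (hdec : ∀ i j, i ≤ j → j < p + m → lam j ≤ lam i)
    (hpos : ∀ i, i < p + m → 0 < lam i)
    (hgap : lam p < lam (p - 1))
    (hβ1 : β * (lam 0 - lam (p + m - 1)) < 1) :
    let olL : Matrix (Fin p) (Fin p) ℝ := Matrix.diagonal fun j => lam j.val
    let ulL : Matrix (Fin m) (Fin m) ℝ := Matrix.diagonal fun i => lam (p + i.val)
    let Lop : Matrix (Fin m) (Fin p) ℝ → Matrix (Fin m) (Fin p) ℝ :=
      fun T => T + β • (ulL * T) - β • (T * olL)
    (∀ T (i : Fin m) (j : Fin p),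
        Lop T i j = (1 + β * lam (p + i.val) - β * lam j.val) * T i j) ∧
    (⨆ T : {T : Matrix (Fin m) (Fin p) ℝ // spec T = 1}, spec (Lop T.1))
        = 1 - β * (lam (p - 1) - lam p) ∧
    (⨆ T : {T : Matrix (Fin m) (Fin p) ℝ // frob T = 1}, frob (Lop T.1))
        = 1 - β * (lam (p - 1) - lam p) := by
  intro olL ulL Lop
  have : Nonempty (Fin p) := ⟨⟨0, hp⟩⟩
  have : Nonempty (Fin m) := ⟨⟨0, hm⟩⟩
  -- entrywise formula
  have hentry : ∀ T (i : Fin m) (j : Fin p),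
      Lop T i j = (1 + β * lam (p + i.val) - β * lam j.val) * T i j := by
    intro T i j
    simp only [Lop, ulL, olL, Matrix.sub_apply, Matrix.add_apply, Matrix.smul_apply,
      Matrix.diagonal_mul, Matrix.mul_diagonal, smul_eq_mul]
    ring
  -- basic inequalities, with β-scaled versions for linarith
  have hml : lam (p + m - 1) ≤ lam p := hdec p (p+m-1) (by omega) (by omega)
  have h0p : lam (p-1) ≤ lam 0 := hdec 0 (p-1) (by omega) (by omega)
  have bml : β * lam (p + m - 1) ≤ β * lam p := mul_le_mul_of_nonneg_left hml hβ.le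
  have b0p : β * lam (p-1) ≤ β * lam 0 := mul_le_mul_of_nonneg_left h0p hβ.le
  set c := 1 - β * (lam (p-1) - lam p) with hc
  have hc_pos : 0 < c := by rw [hc]; nlinarith
  set z := 1 + β * (lam (p+m-1) + lam p) / 2 with hz
  set A' : Matrix (Fin m) (Fin m) ℝ :=
    Matrix.diagonal (fun i : Fin m => 1 + β * lam (p + i.val) - z) with hA'
  set B' : Matrix (Fin p) (Fin p) ℝ :=
    Matrix.diagonal (fun j : Fin p => z - β * lam j.val) with hB'
  have hsplit : ∀ T, Lop T = A' * T + T * B' := by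
    intro T; ext i j
    rw [hentry]
    simp only [Matrix.add_apply, hA', hB', Matrix.diagonal_mul, Matrix.mul_diagonal]
    ring
  have hA'le : ‖A'‖ ≤ β * (lam p - lam (p+m-1)) / 2 := by
    refine diag_norm_le _ (by nlinarith) fun i => ?_
    have h1 : lam (p + i.val) ≤ lam p := hdec p (p + i.val) (by omega) (by omega)
    have h2 : lam (p+m-1) ≤ lam (p + i.val) := hdec (p + i.val) (p+m-1) (by omega) (by omega)
    have b1 : β * lam (p + i.val) ≤ β * lam p := mul_le_mul_of_nonneg_left h1 hβ.le
    have b2 : β * lam (p+m-1) ≤ β * lam (p + i.val) := mul_le_mul_of_nonneg_left h2 hβ.le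
    rw [abs_le, hz]
    constructor <;> [linarith; linarith]
  have hB'le : ‖B'‖ ≤ z - β * lam (p-1) := by
    refine diag_norm_le _ (by rw [hz]; nlinarith) fun j => ?_
    have h1 : lam (p-1) ≤ lam j.val := hdec j.val (p-1) (by omega) (by omega)
    have h2 : lam j.val ≤ lam 0 := hdec 0 j.val (by omega) (by omega)
    have b1 : β * lam (p-1) ≤ β * lam j.val := mul_le_mul_of_nonneg_left h1 hβ.le
    have b2 : β * lam j.val ≤ β * lam 0 := mul_le_mul_of_nonneg_left h2 hβ.le
    rw [abs_le, hz]
    constructor <;> [linarith; linarith]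
  -- uniform bound (spectral)
  have hbound : ∀ T : Matrix (Fin m) (Fin p) ℝ, spec T = 1 → spec (Lop T) ≤ c := by
    intro T hT
    rw [spec_eq_norm] at hT ⊢
    rw [hsplit]
    calc ‖A' * T + T * B'‖ ≤ ‖A' * T‖ + ‖T * B'‖ := norm_add_le _ _
      _ ≤ ‖A'‖ * ‖T‖ + ‖T‖ * ‖B'‖ :=
        add_le_add (Matrix.l2_opNorm_mul _ _) (Matrix.l2_opNorm_mul _ _)
      _ ≤ (β * (lam p - lam (p+m-1)) / 2) * 1 + 1 * (z - β * lam (p-1)) := by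
        rw [hT]
        gcongr
      _ = c := by rw [hc, hz]; ring
  -- the extremal matrix
  set i0 : Fin m := ⟨0, hm⟩ with hi0
  set j0 : Fin p := ⟨p-1, by omega⟩ with hj0
  set T0 : Matrix (Fin m) (Fin p) ℝ := Matrix.single i0 j0 1 with hT0
  have happ : ∀ (i : Fin m) (j : Fin p), T0 i j = if i0 = i ∧ j0 = j then 1 else 0 :=
    fun i j => rfl
  have hTT : T0ᴴ * T0 = Matrix.diagonal (fun j => if j0 = j then (1:ℝ) else 0) := by
    ext a b
    rw [Matrix.mul_apply, Finset.sum_eq_single i0]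
    · rw [Matrix.conjTranspose_apply, star_trivial, happ, happ, Matrix.diagonal_apply]
      by_cases h1 : j0 = a
      · by_cases h2 : j0 = b
        · rw [← h1, ← h2]; simp
        · have hab : ¬ (a = b) := fun h => h2 (h ▸ h1)
          simp [h2, hab]
      · simp [h1]
    · intro x _ hx
      rw [Matrix.conjTranspose_apply, star_trivial, happ,
        if_neg (fun h => hx h.1.symm), zero_mul]
    · intro h; exact absurd (Finset.mem_univ i0) h
  have hT0norm : ‖T0‖ = 1 := by
    have h1 : ‖T0ᴴ * T0‖ = 1 := by
      rw [hTT]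
      refine le_antisymm (diag_norm_le _ zero_le_one fun i => ?_) ?_
      · by_cases h : j0 = i <;> simp [h]
      · simpa using le_diag_norm (fun j => if j0 = j then (1:ℝ) else 0) j0
    rw [Matrix.l2_opNorm_conjTranspose_mul_self] at h1
    nlinarith [norm_nonneg T0]
  have hcoeff : 1 + β * lam (p + i0.val) - β * lam j0.val = c := by
    rw [hc, hi0, hj0]
    simp only [Fin.val_mk, Nat.add_zero]
    ring
  have hLT0 : Lop T0 = c • T0 := by
    ext i j
    rw [hentry, Matrix.smul_apply, happ]
    by_cases h : i0 = i ∧ j0 = j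
    · obtain ⟨hi, hj⟩ := h
      rw [if_pos ⟨hi, hj⟩, smul_eq_mul, mul_one, mul_one, ← hi, ← hj, hcoeff]
    · rw [if_neg h, smul_eq_mul, mul_zero, mul_zero]
  -- spectral supremum
  have hspec : (⨆ T : {T : Matrix (Fin m) (Fin p) ℝ // spec T = 1}, spec (Lop T.1)) = c := by
    refine ciSup_eq_of _ (fun T => hbound T.1 T.2) ?_
    refine ⟨⟨T0, by rw [spec_eq_norm]; exact hT0norm⟩, ?_⟩
    show spec (Lop T0) = c
    rw [hLT0, spec_eq_norm, norm_smul, Real.norm_eq_abs, abs_of_pos hc_pos, hT0norm, mul_one]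
  refine ⟨hentry, hspec, ?_⟩
  -- Frobenius part
  have hfrob_smul : ∀ (r : ℝ) (T : Matrix (Fin m) (Fin p) ℝ), frob (r • T) = |r| * frob T := by
    intro r T
    show Real.sqrt (∑ i, ∑ j, ((r • T) i j)^2) = |r| * Real.sqrt (∑ i, ∑ j, (T i j)^2)
    have h : ∀ (i : Fin m) (j : Fin p), ((r • T) i j)^2 = r^2 * (T i j)^2 := by
      intro i j; rw [Matrix.smul_apply, smul_eq_mul]; ring
    simp_rw [h, ← Finset.mul_sum]
    rw [Real.sqrt_mul (sq_nonneg r), Real.sqrt_sq_eq_abs]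
  have hfT0 : frob T0 = 1 := by
    show Real.sqrt (∑ i, ∑ j, (T0 i j)^2) = 1
    have h : ∀ (i : Fin m) (j : Fin p),
        (T0 i j)^2 = (if i0 = i then (1:ℝ) else 0) * (if j0 = j then 1 else 0) := by
      intro i j
      rw [happ]
      by_cases h1 : i0 = i <;> by_cases h2 : j0 = j <;> simp [h1, h2]
    simp_rw [h, ← Finset.mul_sum, ← Finset.sum_mul]
    rw [Finset.sum_ite_eq, Finset.sum_ite_eq, if_pos (Finset.mem_univ i0),
      if_pos (Finset.mem_univ j0), one_mul, Real.sqrt_one]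
  have hfbound : ∀ T : Matrix (Fin m) (Fin p) ℝ, frob T = 1 → frob (Lop T) ≤ c := by
    intro T hT
    have key : frob (Lop T) ≤ c * frob T := by
      show Real.sqrt (∑ i, ∑ j, (Lop T i j)^2) ≤ c * Real.sqrt (∑ i, ∑ j, (T i j)^2)
      have step : ∀ (i : Fin m) (j : Fin p), (Lop T i j)^2 ≤ c^2 * (T i j)^2 := by
        intro i j
        rw [hentry]
        have h1 : lam (p + i.val) ≤ lam p := hdec p (p + i.val) (by omega) (by omega)
        have h2 : lam (p+m-1) ≤ lam (p + i.val) := hdec (p + i.val) (p+m-1) (by omega) (by omega)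
        have h3 : lam (p-1) ≤ lam j.val := hdec j.val (p-1) (by omega) (by omega)
        have h4 : lam j.val ≤ lam 0 := hdec 0 j.val (by omega) (by omega)
        have b1 : β * lam (p + i.val) ≤ β * lam p := mul_le_mul_of_nonneg_left h1 hβ.le
        have b2 : β * lam (p+m-1) ≤ β * lam (p + i.val) := mul_le_mul_of_nonneg_left h2 hβ.le
        have b3 : β * lam (p-1) ≤ β * lam j.val := mul_le_mul_of_nonneg_left h3 hβ.le
        have b4 : β * lam j.val ≤ β * lam 0 := mul_le_mul_of_nonneg_left h4 hβ.le
        have hub : 1 + β * lam (p + i.val) - β * lam j.val ≤ c := by rw [hc]; linarith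
        have hlb : 0 < 1 + β * lam (p + i.val) - β * lam j.val := by linarith
        have hsq : (1 + β * lam (p + i.val) - β * lam j.val)^2 ≤ c^2 := by nlinarith
        calc ((1 + β * lam (p + i.val) - β * lam j.val) * T i j)^2
            = (1 + β * lam (p + i.val) - β * lam j.val)^2 * (T i j)^2 := by ring
          _ ≤ c^2 * (T i j)^2 := mul_le_mul_of_nonneg_right hsq (sq_nonneg _)
      calc Real.sqrt (∑ i, ∑ j, (Lop T i j)^2)
          ≤ Real.sqrt (∑ i, ∑ j, c^2 * (T i j)^2) := by
            apply Real.sqrt_le_sqrt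
            exact Finset.sum_le_sum fun i _ => Finset.sum_le_sum fun j _ => step i j
        _ = c * Real.sqrt (∑ i, ∑ j, (T i j)^2) := by
            simp_rw [← Finset.mul_sum]
            rw [Real.sqrt_mul (sq_nonneg c), Real.sqrt_sq hc_pos.le]
    rw [hT, mul_one] at key
    exact key
  refine ciSup_eq_of _ (fun T => hfbound T.1 T.2) ?_
  refine ⟨⟨T0, hfT0⟩, ?_⟩
  show frob (Lop T0) = c
  rw [hLT0, hfrob_smul, hfT0, abs_of_pos hc_pos, mul_one]
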